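/- Let F_S : [0,1]^m → ℂ depend only on the coordinates in S ⊆ [m], let A ⊆ [0,1] be measurable with λ(A) = α ∈ (0,1), and let 0 ≤ r ≤ m. Then ∫_{A^{m−r} × (A^c)^r} F_S = (−1)^{|S ∩ {m−r+1,…,m}|} ((1−α)/α)^{r − |S ∩ {m−r+1,…,m}|} ∫_{A^m} F_S, provided ∫_0^1 F_S(x) dx_i = 0 for each i ∈ S. -/

import Mathlib

open MeasureTheory

/-- The unit cube `[0,1]^m` as a subset of `Fin m → ℝ`. -/
def unitCube (m : ℕ) : Set (Fin m → ℝ) := Set.univ.pi fun _ => Set.Icc (0 : ℝ) 1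

lemma restrict_pi_pi' {m : ℕ} (C : Fin m → Set ℝ) (hC : ∀ j, MeasurableSet (C j)) :
    (volume : Measure (Fin m → ℝ)).restrict (Set.univ.pi C)
      = Measure.pi (fun j => volume.restrict (C j)) := by
  refine (Measure.pi_eq fun s hs => ?_).symm
  rw [Measure.restrict_apply (MeasurableSet.univ_pi hs), ← Set.pi_inter_distrib,
    volume_pi_pi]
  exact Finset.prod_congr rfl fun i _ => (Measure.restrict_apply (hs i)).symm

lemma peel {n : ℕ} (ν : Fin (n+1) → Measure ℝ) [∀ j, IsFiniteMeasure (ν j)] (i : Fin (n+1))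
    {F : (Fin (n+1) → ℝ) → ℂ} (hF : Integrable F (Measure.pi ν)) :
    ∫ x, F x ∂Measure.pi ν
      = ∫ y, ∫ t, F (i.insertNth t y) ∂(ν i) ∂(Measure.pi fun j => ν (i.succAbove j)) := by
  have hmp := measurePreserving_piFinSuccAbove ν i
  set e := MeasurableEquiv.piFinSuccAbove (fun _ : Fin (n+1) => ℝ) i with he
  have h1 : ∫ x, F x ∂Measure.pi ν
      = ∫ p, F (e.symm p) ∂((ν i).prod (Measure.pi fun j => ν (i.succAbove j))) :=
    ((hmp.symm).integral_comp e.symm.measurableEmbedding F).symm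
  have hint2 : Integrable (fun p => F (e.symm p))
      ((ν i).prod (Measure.pi fun j => ν (i.succAbove j))) := by
    rw [← (hmp.symm).integrable_comp_emb e.symm.measurableEmbedding] at hF
    exact hF
  rw [h1, integral_prod_symm _ hint2]
  simp [e, MeasurableEquiv.piFinSuccAbove, Fin.insertNthEquiv]

lemma sections_int {n : ℕ} (ν : Fin (n+1) → Measure ℝ) [∀ j, IsFiniteMeasure (ν j)]
    (i : Fin (n+1)) {F : (Fin (n+1) → ℝ) → ℂ} (hF : Integrable F (Measure.pi ν)) :
    ∀ᵐ y ∂(Measure.pi fun j => ν (i.succAbove j)),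
      Integrable (fun t => F (i.insertNth t y)) (ν i) := by
  have hmp := measurePreserving_piFinSuccAbove ν i
  set e := MeasurableEquiv.piFinSuccAbove (fun _ : Fin (n+1) => ℝ) i with he
  have hint2 : Integrable (fun p => F (e.symm p))
      ((ν i).prod (Measure.pi fun j => ν (i.succAbove j))) := by
    rw [← (hmp.symm).integrable_comp_emb e.symm.measurableEmbedding] at hF
    exact hF
  have := hint2.prod_left_ae
  refine this.mono fun y hy => ?_
  simpa [e, MeasurableEquiv.piFinSuccAbove, Fin.insertNthEquiv] using hy

lemma step {n : ℕ} (ν : Fin (n+1) → Measure ℝ) [∀ j, IsFiniteMeasure (ν j)]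
    (i : Fin (n+1)) (μ₁ μ₂ : Measure ℝ) [IsFiniteMeasure μ₁] [IsFiniteMeasure μ₂] (c : ℂ)
    {F : (Fin (n+1) → ℝ) → ℂ}
    (hF1 : Integrable F (Measure.pi (Function.update ν i μ₁)))
    (hF2 : Integrable F (Measure.pi (Function.update ν i μ₂)))
    (h : ∀ᵐ y ∂(Measure.pi fun j => ν (i.succAbove j)),
        ∫ t, F (i.insertNth t y) ∂μ₁ = c * ∫ t, F (i.insertNth t y) ∂μ₂) :
    ∫ x, F x ∂Measure.pi (Function.update ν i μ₁)
      = c * ∫ x, F x ∂Measure.pi (Function.update ν i μ₂) := by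
  haveI h₁ : ∀ j, IsFiniteMeasure (Function.update ν i μ₁ j) := by
    intro j
    rcases eq_or_ne j i with rfl | hj
    · simpa using ‹IsFiniteMeasure μ₁›
    · rw [Function.update_of_ne hj]; infer_instance
  haveI h₂ : ∀ j, IsFiniteMeasure (Function.update ν i μ₂ j) := by
    intro j
    rcases eq_or_ne j i with rfl | hj
    · simpa using ‹IsFiniteMeasure μ₂›
    · rw [Function.update_of_ne hj]; infer_instance
  have hs₁ : (fun j => Function.update ν i μ₁ (i.succAbove j)) = fun j => ν (i.succAbove j) :=
    funext fun j => Function.update_of_ne (Fin.succAbove_ne i j) _ _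
  have hs₂ : (fun j => Function.update ν i μ₂ (i.succAbove j)) = fun j => ν (i.succAbove j) :=
    funext fun j => Function.update_of_ne (Fin.succAbove_ne i j) _ _
  rw [peel _ i hF1, peel _ i hF2, hs₁, hs₂, Function.update_self, Function.update_self,
    ← MeasureTheory.integral_const_mul]
  exact integral_congr_ae h

lemma card_filter_ge (m k : ℕ) :
    (Finset.univ.filter fun i : Fin m => k ≤ (i : ℕ)).card = m - k := by
  rw [← Nat.card_Ico k m]
  refine Finset.card_bij (fun i _ => (i : ℕ)) ?_ ?_ ?_
  · intro a ha
    simp only [Finset.mem_filter] at ha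
    simp [Finset.mem_Ico, ha.2, a.isLt]
  · intro a _ b _ h; exact Fin.ext h
  · intro b hb
    simp only [Finset.mem_Ico] at hb
    exact ⟨⟨b, hb.2⟩, by simp [hb.1], rfl⟩

/-- for a generalized Walsh function `F_S` supported on `S`,
`∫_{A^{m−r} × (A^c)^r} F_S = (−1)^{|S ∩ T|} ((1−α)/α)^{r−|S ∩ T|} ∫_{A^m} F_S`,
where `T = {m−r+1,…,m}` is the set of the last `r` coordinates. -/
theorem walsh_integral_on_mixed_product {m r : ℕ} (hr : r ≤ m)
    (S : Finset (Fin m)) (F : (Fin m → ℝ) → ℂ)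
    (hdep : ∀ x y : Fin m → ℝ, (∀ i ∈ S, x i = y i) → F x = F y)
    (hint : IntegrableOn F (unitCube m))
    (hmarg : ∀ i ∈ S, ∀ x : Fin m → ℝ, ∫ t in (0:ℝ)..1, F (Function.update x i t) = 0)
    (α : ℝ) (hα : α ∈ Set.Ioo (0:ℝ) 1)
    (A : Set ℝ) (hA : MeasurableSet A) (hAsub : A ⊆ Set.Icc (0:ℝ) 1)
    (hvol : volume A = ENNReal.ofReal α) :
    ∫ x in Set.univ.pi (fun i : Fin m =>
        if (i : ℕ) < m - r then A else Set.Icc (0:ℝ) 1 \ A), F x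
    = (-1 : ℂ) ^ (S.filter fun i : Fin m => m - r ≤ (i : ℕ)).card *
      ((((1 - α) / α) ^ (r - (S.filter fun i : Fin m => m - r ≤ (i : ℕ)).card) : ℝ) : ℂ) *
      ∫ x in Set.univ.pi (fun _ : Fin m => A), F x := by
  classical
  obtain _ | n := m
  · -- m = 0
    obtain rfl : r = 0 := Nat.le_zero.mp hr
    have hS : S = ∅ := Finset.eq_empty_of_isEmpty S
    subst hS
    have hpi : ∀ B : Fin 0 → Set ℝ, Set.univ.pi B = Set.univ := fun B => by
      ext x; simp
    simp only [hpi]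
    simp
  -- m = n + 1
  set k : ℕ := n + 1 - r with hk
  set q : ℂ := (((1 - α) / α : ℝ) : ℂ) with hq
  set c : Fin (n+1) → ℂ := fun j => if j ∈ S then (-1 : ℂ) else q with hc
  have hα0 : (0:ℝ) < α := hα.1
  have hα1 : α < 1 := hα.2
  have hvolAc : volume (Set.Icc (0:ℝ) 1 \ A) = ENNReal.ofReal (1 - α) := by
    rw [measure_diff hAsub hA.nullMeasurableSet (by rw [hvol]; exact ENNReal.ofReal_ne_top),
      hvol, Real.volume_Icc]
    rw [← ENNReal.ofReal_sub _ hα0.le]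
    norm_num
  have hfin : ∀ (s : Set ℝ), s ⊆ Set.Icc (0:ℝ) 1 → IsFiniteMeasure (volume.restrict s) := by
    intro s hs
    constructor
    rw [Measure.restrict_apply_univ]
    refine lt_of_le_of_lt (measure_mono hs) ?_
    rw [Real.volume_Icc]
    exact ENNReal.ofReal_lt_top
  have hIntC : ∀ C : Fin (n+1) → Set ℝ, (∀ j, C j ⊆ Set.Icc (0:ℝ) 1) →
      (∀ j, MeasurableSet (C j)) →
      Integrable F (Measure.pi fun j => volume.restrict (C j)) := by
    intro C hsub hmeas
    rw [← restrict_pi_pi' C hmeas]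
    exact hint.mono_set fun x hx j hj => hsub j (hx j hj)
  have key : ∀ t : Finset (Fin (n+1)),
      ∫ x, F x ∂(Measure.pi fun j =>
        volume.restrict (if j ∈ t then Set.Icc (0:ℝ) 1 \ A else A))
      = (∏ j ∈ t, c j) * ∫ x, F x ∂(Measure.pi fun _ => volume.restrict A) := by
    intro t
    induction t using Finset.induction_on with
    | empty => simp
    | @insert i t hi ih =>
      set C : Fin (n+1) → Set ℝ := fun j => if j ∈ t then Set.Icc (0:ℝ) 1 \ A else A with hC
      have hCsub : ∀ j, C j ⊆ Set.Icc (0:ℝ) 1 := by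
        intro j; rw [hC]; dsimp only; split
        · exact Set.diff_subset
        · exact hAsub
      have hCmeas : ∀ j, MeasurableSet (C j) := by
        intro j; rw [hC]; dsimp only; split
        · exact measurableSet_Icc.diff hA
        · exact hA
      haveI : ∀ j, IsFiniteMeasure (volume.restrict (C j)) := fun j => hfin _ (hCsub j)
      haveI : IsFiniteMeasure (volume.restrict (Set.Icc (0:ℝ) 1 \ A)) :=
        hfin _ Set.diff_subset
      haveI : IsFiniteMeasure (volume.restrict A) := hfin _ hAsub
      have hupd1 : (fun j => volume.restrict (if j ∈ insert i t then Set.Icc (0:ℝ) 1 \ A else A))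
          = Function.update (fun j => volume.restrict (C j)) i
              (volume.restrict (Set.Icc (0:ℝ) 1 \ A)) := by
        funext j
        rcases eq_or_ne j i with rfl | hj
        · simp
        · rw [Function.update_of_ne hj]
          simp [C, Finset.mem_insert, hj]
      have hupd2 : (fun j => volume.restrict (C j))
          = Function.update (fun j => volume.restrict (C j)) i (volume.restrict A) := by
        funext j
        rcases eq_or_ne j i with rfl | hj
        · simp [C, hi]
        · rw [Function.update_of_ne hj]
      have hF1 : Integrable F (Measure.pi (Function.update (fun j => volume.restrict (C j)) i
          (volume.restrict (Set.Icc (0:ℝ) 1 \ A)))) := by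
        rw [← hupd1]
        refine hIntC _ ?_ ?_
        · intro j; split
          · exact Set.diff_subset
          · exact hAsub
        · intro j; split
          · exact measurableSet_Icc.diff hA
          · exact hA
      have hF2 : Integrable F (Measure.pi (Function.update (fun j => volume.restrict (C j)) i
          (volume.restrict A))) := by
        rw [← hupd2]
        exact hIntC _ hCsub hCmeas
      have hae : ∀ᵐ y ∂(Measure.pi fun j => volume.restrict (C (i.succAbove j))),
          ∫ s, F (i.insertNth s y) ∂(volume.restrict (Set.Icc (0:ℝ) 1 \ A))
          = c i * ∫ s, F (i.insertNth s y) ∂(volume.restrict A) := by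
        by_cases hiS : i ∈ S
        · -- i ∈ S : use the vanishing marginal
          set C' : Fin (n+1) → Set ℝ := Function.update C i (Set.Icc (0:ℝ) 1) with hC'
          have hC'sub : ∀ j, C' j ⊆ Set.Icc (0:ℝ) 1 := by
            intro j
            rcases eq_or_ne j i with rfl | hj
            · rw [hC', Function.update_self]
            · rw [hC', Function.update_of_ne hj]; exact hCsub j
          have hC'meas : ∀ j, MeasurableSet (C' j) := by
            intro j
            rcases eq_or_ne j i with rfl | hj
            · rw [hC', Function.update_self]; exact measurableSet_Icc
            · rw [hC', Function.update_of_ne hj]; exact hCmeas j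
          haveI : ∀ j, IsFiniteMeasure (volume.restrict (C' j)) := fun j => hfin _ (hC'sub j)
          have hsec := sections_int (fun j => volume.restrict (C' j)) i (hIntC C' hC'sub hC'meas)
          have hmeq : (fun j => volume.restrict (C' (i.succAbove j)))
              = fun j => volume.restrict (C (i.succAbove j)) := by
            funext j
            rw [hC', Function.update_of_ne (Fin.succAbove_ne i j)]
          rw [hmeq] at hsec
          have hCi' : C' i = Set.Icc (0:ℝ) 1 := by rw [hC', Function.update_self]
          refine hsec.mono fun y hy => ?_
          have hyInt : IntegrableOn (fun s => F (i.insertNth s y)) (Set.Icc (0:ℝ) 1) := by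
            simpa [hC', IntegrableOn] using hy
          have hzero : ∫ s in Set.Icc (0:ℝ) 1, F (i.insertNth s y) = 0 := by
            have h01 : ∀ s : ℝ, F (i.insertNth s y)
                = F (Function.update (i.insertNth 0 y) i s) := fun s => by
              rw [Fin.update_insertNth]
            have hm := hmarg i hiS (i.insertNth 0 y)
            rw [intervalIntegral.integral_of_le zero_le_one] at hm
            rw [integral_Icc_eq_integral_Ioc]
            simp_rw [h01]
            exact hm
          have hdiff := integral_diff hA hyInt hAsub
          rw [hzero, zero_sub] at hdiff
          have hci : c i = -1 := by simp [hc, hiS]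
          rw [hdiff, hci]
          ring
        · -- i ∉ S : the section is constant in the i-th coordinate
          refine Filter.Eventually.of_forall fun y => ?_
          have hconst : ∀ s : ℝ, F (i.insertNth s y) = F (i.insertNth 0 y) := by
            intro s
            apply hdep
            intro j hj
            have hji : j ≠ i := fun h => hiS (h ▸ hj)
            obtain ⟨j', rfl⟩ := Fin.exists_succAbove_eq hji
            simp
          simp_rw [hconst]
          rw [integral_const, integral_const, measureReal_def, measureReal_def, Measure.restrict_apply_univ,
            Measure.restrict_apply_univ, hvolAc, hvol,
            ENNReal.toReal_ofReal (by linarith), ENNReal.toReal_ofReal hα0.le]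
          have hci : c i = (((1 - α) / α : ℝ) : ℂ) := by simp [hc, hiS, hq]
          rw [hci]
          rw [Complex.real_smul, Complex.real_smul]
          have harith : ((1 - α : ℝ) : ℂ) = (((1 - α) / α : ℝ) : ℂ) * ((α : ℝ) : ℂ) := by
            rw [← Complex.ofReal_mul, div_mul_cancel₀ _ hα0.ne']
          rw [harith]
          ring
      rw [hupd1, step (fun j => volume.restrict (C j)) i _ _ (c i) hF1 hF2 hae, ← hupd2,
        ih, Finset.prod_insert hi, mul_assoc]
  -- assemble
  set T : Finset (Fin (n+1)) := Finset.univ.filter (fun i : Fin (n+1) => k ≤ (i : ℕ)) with hT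
  have hset1 : (fun i : Fin (n+1) => if (i : ℕ) < k then A else Set.Icc (0:ℝ) 1 \ A)
      = fun j => if j ∈ T then Set.Icc (0:ℝ) 1 \ A else A := by
    funext j
    by_cases h : (j : ℕ) < k
    · have hj : j ∉ T := by
        simp only [hT, Finset.mem_filter, Finset.mem_univ, true_and]
        exact not_le.mpr h
      rw [if_pos h, if_neg hj]
    · have hj : j ∈ T := by
        simp only [hT, Finset.mem_filter, Finset.mem_univ, true_and]
        exact not_lt.mp h
      rw [if_neg h, if_pos hj]
  have hmeas1 : ∀ j : Fin (n+1), MeasurableSet (if j ∈ T then Set.Icc (0:ℝ) 1 \ A else A) := by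
    intro j; split
    · exact measurableSet_Icc.diff hA
    · exact hA
  rw [show (∫ x in Set.univ.pi (fun i : Fin (n+1) =>
      if (i : ℕ) < n + 1 - r then A else Set.Icc (0:ℝ) 1 \ A), F x)
      = ∫ x, F x ∂(Measure.pi fun j =>
          volume.restrict (if j ∈ T then Set.Icc (0:ℝ) 1 \ A else A)) by
    rw [← restrict_pi_pi' _ hmeas1, ← hset1]]
  rw [show (∫ x in Set.univ.pi (fun _ : Fin (n+1) => A), F x)
      = ∫ x, F x ∂(Measure.pi fun _ : Fin (n+1) => volume.restrict A) by
    rw [← restrict_pi_pi' _ (fun _ => hA)]]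
  rw [key T]
  congr 1
  -- compute the product of constants
  have hTS : T.filter (fun j => j ∈ S) = S.filter fun i : Fin (n+1) => k ≤ (i : ℕ) := by
    ext j
    simp only [hT, Finset.mem_filter, Finset.mem_univ, true_and]
    exact and_comm
  have hTcard : T.card = r := by
    rw [hT, card_filter_ge, hk]
    omega
  have hcards := Finset.card_filter_add_card_filter_not (s := T) (p := fun j => j ∈ S)
  rw [hc, Finset.prod_ite, Finset.prod_const, Finset.prod_const, hTS]
  have hcard2 : (T.filter fun j => ¬ j ∈ S).card
      = r - (S.filter fun i : Fin (n+1) => k ≤ (i : ℕ)).card := by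
    rw [hTS] at hcards
    omega
  rw [hcard2, hq]
  push_cast
  ring
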